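/- Let S be a finite set of squares of the n×n board and let C be a positive integer. If there is no collection of C − 1 diagonals such that every square of S lies on one of them, then there exist C squares in S, no two of which lie on a common diagonal. -/

import Mathlib

/-- The n×n board: squares (x,y) ∈ ℤ×ℤ with 1 ≤ x ≤ n and 1 ≤ y ≤ n. -/
noncomputable def board (n : ℕ) : Finset (ℤ × ℤ) := Finset.Icc 1 (n : ℤ) ×ˢ Finset.Icc 1 (n : ℤ)

/-- A line of the board: a row (fixed y), a column (fixed x), a positive
diagonal (fixed x − y), or a negative diagonal (fixed x + y). -/
inductive Line : Type where
  | row : ℤ → Line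
  | col : ℤ → Line
  | posDiag : ℤ → Line
  | negDiag : ℤ → Line
deriving DecidableEq

/-- The defining condition for a point to be on a given line. -/
def Line.pred : Line → ℤ × ℤ → Prop
  | .row b, p => p.2 = b
  | .col a, p => p.1 = a
  | .posDiag d, p => p.1 - p.2 = d
  | .negDiag s, p => p.1 + p.2 = s

instance (L : Line) (p : ℤ × ℤ) : Decidable (L.pred p) :=
  match L with
  | .row b => inferInstanceAs (Decidable (p.2 = b))
  | .col a => inferInstanceAs (Decidable (p.1 = a))
  | .posDiag d => inferInstanceAs (Decidable (p.1 - p.2 = d))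
  | .negDiag s => inferInstanceAs (Decidable (p.1 + p.2 = s))

/-- The set of squares of the n×n board lying on a line. -/
noncomputable def Line.squares (n : ℕ) (L : Line) : Finset (ℤ × ℤ) := (board n).filter L.pred

/-- The length of a line: its number of board squares. -/
noncomputable def Line.length (n : ℕ) (L : Line) : ℕ := (L.squares n).card

/-- Whether a line is a diagonal (of either orientation). -/
def Line.isDiag : Line → Prop
  | .posDiag _ => True
  | .negDiag _ => True
  | _ => False

/-- The set of board squares attacked by a placement S of queens: squares q on
the board such that some queen p ∈ S with p ≠ q shares a row, column, or
diagonal with q. -/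
noncomputable def attacked (n : ℕ) (S : Finset (ℤ × ℤ)) : Finset (ℤ × ℤ) :=
  S.biUnion fun p => (board n).filter fun q =>
    q ≠ p ∧ (p.1 = q.1 ∨ p.2 = q.2 ∨ p.1 - p.2 = q.1 - q.2 ∨ p.1 + p.2 = q.1 + q.2)

/-- G(m) = ⌊m²/12⌋ + 1 if m ≡ 3, 6, 9 (mod 12) or m = 10; ⌊m²/12⌋ otherwise. -/
def G (m : ℕ) : ℕ :=
  if m % 12 = 3 ∨ m % 12 = 6 ∨ m % 12 = 9 ∨ m = 10 then m ^ 2 / 12 + 1 else m ^ 2 / 12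

open Finset

/-- König's theorem for edge sets of integers: if no `< C`-sized cover
(A on first coordinates, B on second) covers all edges of `E`, then `E`
contains a matching of size `C`. -/
lemma konig_edges (C : ℕ) (E : Finset (ℤ × ℤ))
    (h : ∀ A B : Finset ℤ, A.card + B.card < C → ∃ e ∈ E, e.1 ∉ A ∧ e.2 ∉ B) :
    ∃ M ⊆ E, M.card = C ∧ ∀ e ∈ M, ∀ f ∈ M, e ≠ f → e.1 ≠ f.1 ∧ e.2 ≠ f.2 := by
  rcases Nat.eq_zero_or_pos C with hC | hC
  · exact ⟨∅, by simp [hC]⟩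
  set A : Finset ℤ := E.image Prod.fst with hA
  have hAC : C ≤ A.card := by
    by_contra hlt
    obtain ⟨e, heE, he1, _⟩ := h A ∅ (by simpa using Nat.lt_of_not_le hlt)
    exact he1 (mem_image_of_mem Prod.fst heE)
  set d : ℕ := A.card - C with hd
  -- Hall family: each first coordinate sees its neighbours plus d dummies
  set t : {a // a ∈ A} → Finset (ℤ ⊕ Fin d) := fun a =>
    ((E.filter (fun e => e.1 = a.1)).image (fun e => Sum.inl e.2)) ∪
      (Finset.univ.image Sum.inr) with ht
  have hall : ∀ s : Finset {a // a ∈ A}, s.card ≤ (s.biUnion t).card := by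
    intro s
    rcases s.eq_empty_or_nonempty with rfl | ⟨a0, ha0⟩
    · simp
    set s' : Finset ℤ := s.image (fun a => a.1) with hs'
    have hs'card : s'.card = s.card := card_image_of_injective _ Subtype.val_injective
    have hs'A : s' ⊆ A := by
      intro x hx; obtain ⟨a, _, rfl⟩ := mem_image.mp hx; exact a.2
    set N : Finset ℤ := (E.filter (fun e => e.1 ∈ s')).image Prod.snd with hN
    have key : C ≤ (A \ s').card + N.card := by
      by_contra hlt
      obtain ⟨e, heE, he1, he2⟩ := h (A \ s') N (Nat.lt_of_not_le hlt)
      have heA : e.1 ∈ A := mem_image_of_mem Prod.fst heE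
      have hes' : e.1 ∈ s' := by
        by_contra hns; exact he1 (mem_sdiff.mpr ⟨heA, hns⟩)
      exact he2 (mem_image_of_mem Prod.snd (mem_filter.mpr ⟨heE, hes'⟩))
    have hsub : (N.image Sum.inl ∪ (Finset.univ.image (Sum.inr : Fin d → ℤ ⊕ Fin d)))
        ⊆ s.biUnion t := by
      intro x hx
      rcases mem_union.mp hx with hx | hx
      · obtain ⟨b, hb, rfl⟩ := mem_image.mp hx
        obtain ⟨e, he, rfl⟩ := mem_image.mp hb
        have heE := (mem_filter.mp he).1
        have hes' := (mem_filter.mp he).2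
        obtain ⟨a, has, ha⟩ := mem_image.mp hes'
        refine mem_biUnion.mpr ⟨a, has, ?_⟩
        exact mem_union_left _ (mem_image.mpr ⟨e, mem_filter.mpr ⟨heE, ha.symm⟩, rfl⟩)
      · exact mem_biUnion.mpr ⟨a0, ha0, mem_union_right _ hx⟩
    have hdisj : Disjoint (N.image Sum.inl)
        ((Finset.univ.image (Sum.inr : Fin d → ℤ ⊕ Fin d))) := by
      simp [disjoint_left]
    have hcard : (N.image Sum.inl ∪
        (Finset.univ.image (Sum.inr : Fin d → ℤ ⊕ Fin d))).card = N.card + d := by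
      rw [card_union_of_disjoint hdisj,
        card_image_of_injective _ Sum.inl_injective,
        card_image_of_injective _ Sum.inr_injective]
      simp
    have hle : s.card ≤ N.card + d := by
      have h1 : (A \ s').card = A.card - s'.card := card_sdiff_of_subset hs'A
      have h2 : s'.card ≤ A.card := card_le_card hs'A
      omega
    calc s.card ≤ N.card + d := hle
      _ = _ := hcard.symm
      _ ≤ _ := card_le_card hsub
  obtain ⟨f, hfinj, hfmem⟩ := (Finset.all_card_le_biUnion_card_iff_exists_injective t).mp hall
  -- the elements of A matched to a real neighbour
  set A0 : Finset {a // a ∈ A} := Finset.univ.filter (fun a => (f a).isLeft) with hA0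
  have hA1 : (Finset.univ.filter (fun a : {a // a ∈ A} => ¬ (f a).isLeft)).card ≤ d := by
    set B1 := Finset.univ.filter (fun a : {a // a ∈ A} => ¬ (f a).isLeft) with hB1
    have hsub : B1.image f ⊆ Finset.univ.image (Sum.inr : Fin d → ℤ ⊕ Fin d) := by
      intro x hx
      obtain ⟨a, ha, rfl⟩ := mem_image.mp hx
      have hnl := (mem_filter.mp ha).2
      cases hfa : f a with
      | inl b => rw [hfa] at hnl; simp at hnl
      | inr j => exact mem_image.mpr ⟨j, mem_univ _, rfl⟩
    calc B1.card = (B1.image f).card := (card_image_of_injective _ hfinj).symm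
      _ ≤ _ := card_le_card hsub
      _ ≤ d := by
          rw [card_image_of_injective _ Sum.inr_injective]
          simp
  have hA0card : C ≤ A0.card := by
    have := card_filter_add_card_filter_not
      (s := (Finset.univ : Finset {a // a ∈ A})) (p := fun a => (f a).isLeft)
    have huniv : (Finset.univ : Finset {a // a ∈ A}).card = A.card := by
      rw [card_univ, Fintype.card_coe]
    have h1 : A0.card
        = (Finset.univ.filter (fun a : {a // a ∈ A} => (f a).isLeft)).card := by
      rw [hA0]
    have h3 : d = A.card - C := hd
    omega
  obtain ⟨A2, hA2sub, hA2card⟩ := Finset.exists_subset_card_eq (s := A0) (n := C) hA0card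
  -- extract the matching
  set g : {a // a ∈ A} → ℤ × ℤ := fun a => (a.1, Sum.elim id (fun _ => 0) (f a)) with hg
  have hgE : ∀ a ∈ A0, g a ∈ E ∧ f a = Sum.inl (g a).2 := by
    intro a ha
    have hmem := hfmem a
    have hleft := (mem_filter.mp ha).2
    rw [ht] at hmem
    rcases mem_union.mp hmem with hm | hm
    · obtain ⟨e, he, heq⟩ := mem_image.mp hm
      have heE := (mem_filter.mp he).1
      have he1 := (mem_filter.mp he).2
      cases hfa : f a with
      | inr j => rw [hfa] at hleft; simp at hleft
      | inl b =>
        rw [hfa] at heq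
        have hb : e.2 = b := Sum.inl.inj heq
        have hge : g a = e := by
          rw [hg]; simp only [hfa, Sum.elim_inl, id_eq]
          exact Prod.ext he1.symm hb.symm
        refine ⟨hge ▸ heE, ?_⟩
        rw [hge, hb]

    · exfalso
      obtain ⟨j, _, hj⟩ := mem_image.mp hm
      rw [← hj] at hleft; simp at hleft
  refine ⟨A2.image g, ?_, ?_, ?_⟩
  · intro e he
    obtain ⟨a, ha, rfl⟩ := mem_image.mp he
    exact (hgE a (hA2sub ha)).1
  · rw [card_image_of_injOn, hA2card]
    intro a _ b _ hab
    have : a.1 = b.1 := congrArg Prod.fst hab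
    exact Subtype.ext this
  · intro e he e' he' hne
    obtain ⟨a, ha, rfl⟩ := mem_image.mp he
    obtain ⟨b, hb, rfl⟩ := mem_image.mp he'
    have hab : a ≠ b := fun h => hne (by rw [h])
    constructor
    · simp only [hg]
      exact fun h => hab (Subtype.ext h)
    · intro h2
      apply hab
      apply hfinj
      rw [(hgE a (hA2sub ha)).2, (hgE b (hA2sub hb)).2, h2]

/-- If a finite set S of board squares cannot be covered by C − 1
diagonals, then S contains C squares no two of which share a diagonal. -/
theorem exists_diagonally_independent_squares (n C : ℕ) (hn : 0 < n) (hC : 0 < C)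
    (S : Finset (ℤ × ℤ)) (hS : S ⊆ board n)
    (hcov : ¬ ∃ D : Finset Line, D.card ≤ C - 1 ∧ (∀ L ∈ D, L.isDiag) ∧
      ∀ p ∈ S, ∃ L ∈ D, L.pred p) :
    ∃ T : Finset (ℤ × ℤ), T ⊆ S ∧ T.card = C ∧
      ∀ p ∈ T, ∀ q ∈ T, p ≠ q →
        p.1 - p.2 ≠ q.1 - q.2 ∧ p.1 + p.2 ≠ q.1 + q.2 := by
  classical
  set emb : ℤ × ℤ → ℤ × ℤ := fun p => (p.1 - p.2, p.1 + p.2) with hemb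
  have hembinj : Function.Injective emb := by
    intro p q hpq
    have h1 : p.1 - p.2 = q.1 - q.2 := congrArg Prod.fst hpq
    have h2 : p.1 + p.2 = q.1 + q.2 := congrArg Prod.snd hpq
    have h3 : p.1 = q.1 ∧ p.2 = q.2 := by omega
    exact Prod.ext h3.1 h3.2
  set E : Finset (ℤ × ℤ) := S.image emb with hE
  have hcond : ∀ A B : Finset ℤ, A.card + B.card < C → ∃ e ∈ E, e.1 ∉ A ∧ e.2 ∉ B := by
    intro A B hAB
    by_contra hno
    push_neg at hno
    apply hcov
    refine ⟨A.image Line.posDiag ∪ B.image Line.negDiag, ?_, ?_, ?_⟩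
    · calc _ ≤ (A.image Line.posDiag).card + (B.image Line.negDiag).card :=
            card_union_le _ _
        _ ≤ A.card + B.card := by
            gcongr <;> exact card_image_le
        _ ≤ C - 1 := by omega
    · intro L hL
      rcases Finset.mem_union.mp hL with hL | hL <;>
        obtain ⟨x, _, rfl⟩ := Finset.mem_image.mp hL <;> trivial
    · intro p hp
      have he : emb p ∈ E := Finset.mem_image_of_mem emb hp
      have hthis := hno (emb p) he
      by_cases h1 : p.1 - p.2 ∈ A
      · exact ⟨Line.posDiag (p.1 - p.2),
          Finset.mem_union_left _ (Finset.mem_image_of_mem _ h1), rfl⟩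
      · have h2 : p.1 + p.2 ∈ B := hthis h1
        exact ⟨Line.negDiag (p.1 + p.2),
          Finset.mem_union_right _ (Finset.mem_image_of_mem _ h2), rfl⟩
  obtain ⟨M, hME, hMcard, hMmatch⟩ := konig_edges C E hcond
  refine ⟨S.filter (fun p => emb p ∈ M), Finset.filter_subset _ _, ?_, ?_⟩
  · have himg : (S.filter (fun p => emb p ∈ M)).image emb = M := by
      apply Finset.Subset.antisymm
      · intro e he
        obtain ⟨p, hp, rfl⟩ := Finset.mem_image.mp he
        exact (Finset.mem_filter.mp hp).2
      · intro e he
        obtain ⟨p, hp, rfl⟩ := Finset.mem_image.mp (hME he)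
        exact Finset.mem_image_of_mem emb (Finset.mem_filter.mpr ⟨hp, he⟩)
    calc (S.filter (fun p => emb p ∈ M)).card
        = ((S.filter (fun p => emb p ∈ M)).image emb).card :=
          (Finset.card_image_of_injective _ hembinj).symm
      _ = M.card := by rw [himg]
      _ = C := hMcard
  · intro p hp q hq hpq
    have h1 := (Finset.mem_filter.mp hp).2
    have h2 := (Finset.mem_filter.mp hq).2
    have hne : emb p ≠ emb q := fun h => hpq (hembinj h)
    exact hMmatch _ h1 _ h2 hne
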